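/- Let γ ∈ (0,1) and let Λ: (0,1) → (0,∞) be measurable with c₁·x^{-γ} ≤ Λ(x) ≤ c₂·x^{-γ} for constants 0 < c₁ < c₂ and all x ∈ (0,1). Let D be a mixed Poisson random variable: conditionally on U uniform on (0,1), D is Poisson with parameter Λ(U). Then lim_{k→∞} log P(D ≥ k) / log k = -1/γ. -/

import Mathlib

open MeasureTheory Filter

lemma exp_tsum' (x : ℝ) : Real.exp x = ∑' n : ℕ, x ^ n / n.factorial := by
  rw [Real.exp_eq_exp_ℝ, NormedSpace.exp_eq_tsum_div]

lemma psummable (l : ℝ) : Summable (fun n : ℕ => Real.exp (-l) * l ^ n / n.factorial) := by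
  simpa [mul_div_assoc] using (Real.summable_pow_div_factorial l).mul_left (Real.exp (-l))

lemma ptsum (l : ℝ) : ∑' n : ℕ, Real.exp (-l) * l ^ n / n.factorial = 1 := by
  simp only [mul_div_assoc]
  rw [tsum_mul_left, ← exp_tsum', ← Real.exp_add]
  simp

lemma term_le_exp (x : ℝ) (hx : 0 ≤ x) (n : ℕ) : x ^ n / n.factorial ≤ Real.exp x := by
  rw [exp_tsum' x]
  exact Summable.le_tsum (Real.summable_pow_div_factorial x) n (fun m _ => by positivity)

lemma climb (l : ℝ) : ∀ m : ℕ, 2 * m ≤ l → ∀ n ≤ m,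
    2 ^ (m - n) * (l ^ n / n.factorial) ≤ l ^ m / m.factorial := by
  intro m
  induction m with
  | zero => intro _ n hn; interval_cases n; simp
  | succ m ih =>
    intro hl n hn
    have hl' : (0:ℝ) ≤ l := le_trans (by positivity) hl
    rcases Nat.lt_succ_iff_lt_or_eq.mp (Nat.lt_succ_of_le hn) with h | h
    · have hnm : n ≤ m := Nat.lt_succ_iff.mp h
      have hm : 2 * (m:ℝ) ≤ l := by
        refine le_trans ?_ hl; push_cast; linarith
      have h1 := ih hm n hnm
      have hpow : (2:ℝ) ^ (m + 1 - n) = 2 * 2 ^ (m - n) := by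
        rw [← pow_succ']; congr 1; omega
      rw [hpow, mul_assoc]
      have h2 : 2 * (l ^ m / m.factorial) ≤ l ^ (m+1) / (m+1).factorial := by
        rw [pow_succ, Nat.factorial_succ, mul_div_assoc']
        push_cast
        rw [div_le_div_iff₀ (by positivity) (by positivity)]
        have hfm : (0:ℝ) < m.factorial := by positivity
        have hlm : (0:ℝ) ≤ l ^ m := by positivity
        push_cast at hl
        nlinarith [mul_le_mul_of_nonneg_right (mul_le_mul_of_nonneg_left hl hlm) hfm.le]
      calc 2 * (2 ^ (m-n) * (l ^ n / n.factorial)) ≤ 2 * (l ^ m / m.factorial) := by linarith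
        _ ≤ _ := h2
    · subst h; simp

lemma desc (l : ℝ) (hl : 0 ≤ l) (k : ℕ) (hk : 1 ≤ k) (h2 : 2 * l ≤ k) :
    ∀ j : ℕ, l ^ (j + k) / (j + k).factorial ≤ (1/2) ^ j * (l ^ k / k.factorial) := by
  intro j
  induction j with
  | zero => simp
  | succ j ih =>
    have hkpos : (0:ℝ) < k := by exact_mod_cast hk
    have step : l ^ (j + 1 + k) / (j + 1 + k).factorial
        ≤ (1/2) * (l ^ (j + k) / (j + k).factorial) := by
      have : j + 1 + k = (j + k) + 1 := by omega
      rw [this, pow_succ, Nat.factorial_succ, mul_div_assoc']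
      push_cast
      rw [div_le_div_iff₀ (by positivity) (by positivity)]
      have hf : (0:ℝ) < (j + k).factorial := by positivity
      have hlp : (0:ℝ) ≤ l ^ (j + k) := by positivity
      have hlk : l ≤ k / 2 := by linarith
      have hj : (0:ℝ) ≤ j := Nat.cast_nonneg j
      nlinarith [mul_le_mul_of_nonneg_right (mul_le_mul_of_nonneg_left hlk hlp) hf.le, mul_nonneg (mul_nonneg hlp hf.le) hj, mul_nonneg hlp hf.le]
    calc l ^ (j + 1 + k) / (j + 1 + k).factorial
        ≤ (1/2) * (l ^ (j + k) / (j + k).factorial) := step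
      _ ≤ (1/2) * ((1/2) ^ j * (l ^ k / k.factorial)) := by linarith
      _ = (1/2) ^ (j+1) * (l ^ k / k.factorial) := by ring

lemma fsummable (l : ℝ) (hl : 0 ≤ l) (k : ℕ) :
    Summable (fun n : ℕ => if k ≤ n then Real.exp (-l) * l ^ n / n.factorial else 0) := by
  refine Summable.of_nonneg_of_le (fun n => ?_) (fun n => ?_) (psummable l)
  · split <;> positivity
  · split
    · exact le_refl _
    · positivity

lemma tail_eq (l : ℝ) (hl : 0 ≤ l) (k : ℕ) :
    (∑' n : ℕ, if k ≤ n then Real.exp (-l) * l ^ n / n.factorial else 0)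
      = 1 - ∑ n ∈ Finset.range k, Real.exp (-l) * l ^ n / n.factorial := by
  have hf := fsummable l hl k
  have h1 := Summable.sum_add_tsum_nat_add (f := fun n : ℕ => if k ≤ n then Real.exp (-l) * l ^ n / n.factorial else 0) k hf
  have h2 := Summable.sum_add_tsum_nat_add (f := fun n : ℕ => Real.exp (-l) * l ^ n / n.factorial) k (psummable l)
  have hz : ∑ n ∈ Finset.range k, (if k ≤ n then Real.exp (-l) * l ^ n / n.factorial else 0) = 0 := by
    apply Finset.sum_eq_zero
    intro n hn
    rw [if_neg (by simpa using Finset.mem_range.mp hn)]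
  have heq : (fun n : ℕ => if k ≤ n + k then Real.exp (-l) * l ^ (n+k) / (n+k).factorial else 0)
      = fun n : ℕ => Real.exp (-l) * l ^ (n+k) / (n+k).factorial := by
    funext n; rw [if_pos (Nat.le_add_left k n)]
  rw [hz, zero_add] at h1
  rw [ptsum l] at h2
  simp only [heq] at h1
  linarith [h1, h2]

-- partial sums always in [0,1] for l ≥ 0
lemma partial_nonneg (l : ℝ) (hl : 0 ≤ l) (k : ℕ) :
    0 ≤ ∑ n ∈ Finset.range k, Real.exp (-l) * l ^ n / n.factorial :=
  Finset.sum_nonneg (fun n _ => by positivity)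

lemma partial_le_one (l : ℝ) (hl : 0 ≤ l) (k : ℕ) :
    ∑ n ∈ Finset.range k, Real.exp (-l) * l ^ n / n.factorial ≤ 1 := by
  rw [← ptsum l]
  exact Summable.sum_le_tsum (Finset.range k) (fun n _ => by positivity) (psummable l)

-- lower tail: if l ≥ 4k, k ≥ 1 then partial sum ≤ 1/2
lemma lowsum (l : ℝ) (k : ℕ) (hk : 1 ≤ k) (hl : 4 * k ≤ l) :
    ∑ n ∈ Finset.range k, Real.exp (-l) * l ^ n / n.factorial ≤ 1 / 2 := by
  have hkpos : (0:ℝ) < k := by exact_mod_cast hk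
  have hl0 : (0:ℝ) ≤ l := by linarith
  have hm : 2 * ((k-1 : ℕ) : ℝ) ≤ l := by
    have : ((k-1:ℕ):ℝ) ≤ (k:ℝ) := by exact_mod_cast Nat.sub_le k 1
    linarith
  -- each term ≤ (1/2)^(k-1-n) * (l^(k-1)/(k-1)!)
  have hterm : ∀ n ∈ Finset.range k, l ^ n / n.factorial
      ≤ (1/2) ^ (k-1-n) * (l ^ (k-1) / (k-1).factorial) := by
    intro n hn
    have hn' : n ≤ k - 1 := by have := Finset.mem_range.mp hn; omega
    have hcl := climb l (k-1) hm n hn'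
    have h2 : (0:ℝ) < 2 ^ (k-1-n) := by positivity
    calc l ^ n / n.factorial
        = (2 ^ (k-1-n))⁻¹ * (2 ^ (k-1-n) * (l ^ n / n.factorial)) := by
          field_simp
      _ ≤ (2 ^ (k-1-n))⁻¹ * (l ^ (k-1) / (k-1).factorial) :=
          mul_le_mul_of_nonneg_left hcl (by positivity)
      _ = (1/2) ^ (k-1-n) * (l ^ (k-1) / (k-1).factorial) := by
          rw [one_div, inv_pow]
  have hsum : ∑ n ∈ Finset.range k, l ^ n / n.factorial
      ≤ 2 * (l ^ (k-1) / (k-1).factorial) := by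
    calc ∑ n ∈ Finset.range k, l ^ n / n.factorial
        ≤ ∑ n ∈ Finset.range k, (1/2) ^ (k-1-n) * (l ^ (k-1) / (k-1).factorial) :=
          Finset.sum_le_sum hterm
      _ = (∑ n ∈ Finset.range k, ((1:ℝ)/2) ^ (k-1-n)) * (l ^ (k-1) / (k-1).factorial) := by
          rw [Finset.sum_mul]
      _ ≤ 2 * (l ^ (k-1) / (k-1).factorial) := by
          have hgeom : (∑ n ∈ Finset.range k, ((1:ℝ)/2) ^ (k-1-n)) ≤ 2 := by
            rw [Finset.sum_range_reflect (fun j => ((1:ℝ)/2) ^ j) k]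
            exact sum_geometric_two_le k
          have : (0:ℝ) ≤ l ^ (k-1) / (k-1).factorial := by positivity
          exact mul_le_mul_of_nonneg_right hgeom this
  -- l^(k-1)/(k-1)! ≤ 2^(k-1) * exp(l/2)
  have hexp : l ^ (k-1) / (k-1).factorial ≤ 2 ^ (k-1) * Real.exp (l/2) := by
    have h := term_le_exp (l/2) (by linarith) (k-1)
    have : l ^ (k-1) / (k-1).factorial = 2 ^ (k-1) * ((l/2) ^ (k-1) / (k-1).factorial) := by
      rw [div_pow]
      field_simp
    rw [this]
    have h2 : (0:ℝ) ≤ 2 ^ (k-1) := by positivity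
    exact mul_le_mul_of_nonneg_left h h2
  -- combine
  have hfin : ∑ n ∈ Finset.range k, Real.exp (-l) * l ^ n / n.factorial
      ≤ 2 ^ k * Real.exp (-l/2) := by
    have : ∑ n ∈ Finset.range k, Real.exp (-l) * l ^ n / n.factorial
        = Real.exp (-l) * ∑ n ∈ Finset.range k, l ^ n / n.factorial := by
      rw [Finset.mul_sum]
      exact Finset.sum_congr rfl (fun n _ => by rw [mul_div_assoc])
    rw [this]
    have hE : (0:ℝ) < Real.exp (-l) := Real.exp_pos _
    calc Real.exp (-l) * ∑ n ∈ Finset.range k, l ^ n / n.factorial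
        ≤ Real.exp (-l) * (2 * (2 ^ (k-1) * Real.exp (l/2))) := by
          apply mul_le_mul_of_nonneg_left _ hE.le
          calc ∑ n ∈ Finset.range k, l ^ n / n.factorial
              ≤ 2 * (l ^ (k-1) / (k-1).factorial) := hsum
            _ ≤ 2 * (2 ^ (k-1) * Real.exp (l/2)) := by linarith
      _ = 2 * 2 ^ (k-1) * Real.exp (-l + l/2) := by rw [Real.exp_add]; ring
      _ = 2 ^ k * Real.exp (-l/2) := by
          rw [show (2:ℝ) * 2 ^ (k-1) = 2 ^ (k-1+1) by rw [pow_succ]; ring]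
          congr 2
          · omega
          · ring
  refine hfin.trans ?_
  have hq : Real.exp (-l/2) ≤ Real.exp (-(2*k)) := by
    apply Real.exp_le_exp.mpr; linarith
  have h2k : (2:ℝ) ^ k * Real.exp (-(2*(k:ℝ))) = (2 * Real.exp (-2)) ^ k := by
    rw [mul_pow, ← Real.exp_nat_mul]
    congr 1
    ring_nf
  have hcomb : (2:ℝ) ^ k * Real.exp (-l/2) ≤ (2 * Real.exp (-2)) ^ k := by
    rw [← h2k]
    exact mul_le_mul_of_nonneg_left hq (by positivity)
  refine hcomb.trans ?_
  have h4 : (4:ℝ) < Real.exp 2 := by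
    calc (4:ℝ) < 2.7182818283 ^ 2 := by norm_num
      _ ≤ Real.exp 1 ^ 2 := by
          have := Real.exp_one_gt_d9.le
          nlinarith [Real.exp_pos 1]
      _ = Real.exp 2 := by rw [← Real.exp_nat_mul]; norm_num
  have he : Real.exp (-2) < 1/4 := by
    rw [Real.exp_neg, inv_lt_comm₀ (Real.exp_pos 2) (by norm_num)]
    simpa using h4
  have hq1 : (0:ℝ) ≤ 2 * Real.exp (-2) := by positivity
  have hq2 : 2 * Real.exp (-2) ≤ 1/2 := by linarith
  calc (2 * Real.exp (-2)) ^ k ≤ (2 * Real.exp (-2)) ^ 1 :=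
        pow_le_pow_of_le_one hq1 (by linarith) hk
    _ ≤ 1/2 := by simpa using hq2

lemma tailbound (l : ℝ) (hl : 0 ≤ l) (k : ℕ) (hk : 1 ≤ k) (h2 : 2 * l ≤ k) :
    (∑' n : ℕ, if k ≤ n then Real.exp (-l) * l ^ n / n.factorial else 0)
      ≤ 2 * (Real.exp 1 * l / k) ^ k := by
  have hkpos : (0:ℝ) < k := by exact_mod_cast hk
  have hf := fsummable l hl k
  have h1 := Summable.sum_add_tsum_nat_add
    (f := fun n : ℕ => if k ≤ n then Real.exp (-l) * l ^ n / n.factorial else 0) k hf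
  have hz : ∑ n ∈ Finset.range k,
      (if k ≤ n then Real.exp (-l) * l ^ n / n.factorial else 0) = 0 :=
    Finset.sum_eq_zero (fun n hn => if_neg (by simpa using Finset.mem_range.mp hn))
  rw [hz, zero_add] at h1
  rw [← h1]
  have heq : ∀ n : ℕ, (if k ≤ n + k then Real.exp (-l) * l ^ (n+k) / (n+k).factorial else 0)
      = Real.exp (-l) * l ^ (n+k) / (n+k).factorial := fun n => if_pos (Nat.le_add_left k n)
  simp only [heq]
  have hstep : (∑' n : ℕ, Real.exp (-l) * l ^ (n+k) / (n+k).factorial)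
      ≤ ∑' n : ℕ, (1/2:ℝ) ^ n * (l ^ k / k.factorial) := by
    apply Summable.tsum_le_tsum _ _ (summable_geometric_two.mul_right _)
    · intro n
      have hd := desc l hl k hk h2 n
      have hE : Real.exp (-l) ≤ 1 := by
        rw [Real.exp_le_one_iff]; linarith
      calc Real.exp (-l) * l ^ (n+k) / (n+k).factorial
          ≤ 1 * l ^ (n+k) / (n+k).factorial := by
            apply div_le_div_of_nonneg_right _ (by positivity)
            exact mul_le_mul_of_nonneg_right hE (by positivity)
        _ = l ^ (n+k) / (n+k).factorial := by ring
        _ ≤ (1/2) ^ n * (l ^ k / k.factorial) := hd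
    · exact (summable_nat_add_iff k).2 (psummable l)
  refine hstep.trans ?_
  rw [tsum_mul_right, tsum_geometric_two]
  have hfact : (k:ℝ) ^ k ≤ Real.exp 1 ^ k * k.factorial := by
    have h := term_le_exp (k:ℝ) (by positivity) k
    have hek : Real.exp (k:ℝ) = Real.exp 1 ^ k := by
      rw [← Real.exp_nat_mul]; norm_num
    rw [hek] at h
    have hfpos : (0:ℝ) < k.factorial := by positivity
    rw [div_le_iff₀ hfpos] at h
    exact h
  have : l ^ k / k.factorial ≤ (Real.exp 1 * l / k) ^ k := by
    rw [div_pow, mul_pow]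
    rw [div_le_div_iff₀ (by positivity) (by positivity)]
    have hlk : (0:ℝ) ≤ l ^ k := by positivity
    nlinarith [mul_le_mul_of_nonneg_left hfact hlk]
  linarith

/-- A mixed Poisson random variable whose mixing intensity `Λ(x)` is comparable to `x^(-γ)`
has a power-law tail: `log P(D ≥ k) / log k → -1/γ`. -/
theorem stmt_14 {Ω : Type*} [MeasurableSpace Ω] (P : Measure Ω) [IsProbabilityMeasure P]
    (γ : ℝ) (hγ0 : 0 < γ) (hγ1 : γ < 1)
    (Λ : ℝ → ℝ) (hΛmeas : Measurable Λ)
    (c₁ c₂ : ℝ) (hc₁ : 0 < c₁) (hc₁c₂ : c₁ < c₂)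
    (hΛlb : ∀ x ∈ Set.Ioo (0 : ℝ) 1, c₁ * x ^ (-γ) ≤ Λ x)
    (hΛub : ∀ x ∈ Set.Ioo (0 : ℝ) 1, Λ x ≤ c₂ * x ^ (-γ))
    (D : Ω → ℕ) (hDmeas : Measurable D)
    (hD : ∀ k : ℕ, P {ω | k ≤ D ω}
      = ENNReal.ofReal (∫ x in Set.Ioo (0 : ℝ) 1,
          ∑' n : ℕ, if k ≤ n then Real.exp (-Λ x) * Λ x ^ n / (n.factorial : ℝ) else 0)) :
    Tendsto (fun k : ℕ => Real.log (P {ω | k ≤ D ω}).toReal / Real.log k)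
      atTop (nhds (-(1 / γ))) := by
  have hγne : γ ≠ 0 := ne_of_gt hγ0
  have hc₂ : 0 < c₂ := hc₁.trans hc₁c₂
  set A : ℝ := 2 * Real.exp 1 * c₂ with hAdef
  have hA : 0 < A := by positivity
  have he1 : (1:ℝ) ≤ Real.exp 1 := by
    have := Real.exp_one_gt_d9; linarith
  -- positivity of Λ on Ioo 0 1
  have hΛpos : ∀ x ∈ Set.Ioo (0:ℝ) 1, 0 < Λ x := by
    intro x hx
    have : 0 < c₁ * x ^ (-γ) := by
      have := Real.rpow_pos_of_pos hx.1 (-γ); positivity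
    linarith [hΛlb x hx]
  -- the G functions
  set G : ℕ → ℝ → ℝ := fun k x =>
    1 - ∑ n ∈ Finset.range k, Real.exp (-Λ x) * Λ x ^ n / n.factorial with hGdef
  have hGmeas : ∀ k, Measurable (G k) := by
    intro k
    apply Measurable.sub measurable_const
    apply Finset.measurable_sum
    intro n _
    exact ((hΛmeas.neg.exp.mul (hΛmeas.pow_const n)).div_const _)
  have hG01 : ∀ k, ∀ x ∈ Set.Ioo (0:ℝ) 1, 0 ≤ G k x ∧ G k x ≤ 1 := by
    intro k x hx
    have h := (hΛpos x hx).le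
    constructor
    · simp only [hGdef]; linarith [partial_le_one (Λ x) h k]
    · simp only [hGdef]; linarith [partial_nonneg (Λ x) h k]
  have hGint : ∀ k, IntegrableOn (G k) (Set.Ioo (0:ℝ) 1) volume := by
    intro k
    refine Measure.integrableOn_of_bounded (M := 1) (by simp [Real.volume_Ioo])
      (hGmeas k).aestronglyMeasurable ?_
    refine (ae_restrict_iff' measurableSet_Ioo).2 (ae_of_all _ fun x hx => ?_)
    rw [Real.norm_eq_abs, abs_le]
    exact ⟨by linarith [(hG01 k x hx).1], (hG01 k x hx).2⟩
  -- I k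
  set I : ℕ → ℝ := fun k => ∫ x in Set.Ioo (0:ℝ) 1, G k x with hIdef
  have hD' : ∀ k : ℕ, P {ω | k ≤ D ω} = ENNReal.ofReal (I k) := by
    intro k
    rw [hD k]
    congr 1
    exact setIntegral_congr_fun measurableSet_Ioo
      (fun x hx => tail_eq (Λ x) (hΛpos x hx).le k)
  -- rpow inversion helper
  have hrpow_inv : ∀ a : ℝ, 0 < a → ((a) ^ ((1:ℝ)/γ)) ^ (-γ) = a⁻¹ := by
    intro a ha
    rw [← Real.rpow_mul ha.le]
    have hexp : (1/γ) * (-γ) = -1 := by field_simp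
    rw [hexp, Real.rpow_neg_one]
  -- lower bound on I k
  have hlow : ∀ k : ℕ, 1 ≤ k → c₁ ≤ 4*k →
      (1/2) * (c₁/(4*k)) ^ ((1:ℝ)/γ) ≤ I k := by
    intro k hk1 hck
    have hkpos : (0:ℝ) < k := by exact_mod_cast hk1
    have hbase : (0:ℝ) < c₁/(4*k) := by positivity
    set x₀ : ℝ := (c₁/(4*k)) ^ ((1:ℝ)/γ) with hx₀def
    have hx₀pos : 0 < x₀ := Real.rpow_pos_of_pos hbase _
    have hx₀le1 : x₀ ≤ 1 :=
      Real.rpow_le_one hbase.le (by rw [div_le_one (by positivity)]; linarith) (by positivity)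
    have hΛbig : ∀ x ∈ Set.Ioo (0:ℝ) x₀, 4*(k:ℝ) ≤ Λ x := by
      intro x hx
      have hx1 : x ∈ Set.Ioo (0:ℝ) 1 := ⟨hx.1, lt_of_lt_of_le hx.2 hx₀le1⟩
      have h1 : x₀ ^ (-γ) ≤ x ^ (-γ) :=
        Real.rpow_le_rpow_of_nonpos hx.1 hx.2.le (by linarith)
      have h2 : x₀ ^ (-γ) = (c₁/(4*k))⁻¹ := hrpow_inv _ hbase
      have h3 : c₁ * (c₁/(4*k))⁻¹ = 4*k := by field_simp
      have h4 := hΛlb x hx1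
      have h5 : c₁ * x₀ ^ (-γ) ≤ c₁ * x ^ (-γ) :=
        mul_le_mul_of_nonneg_left h1 hc₁.le
      rw [h2, h3] at h5
      linarith
    have hGhalf : ∀ x ∈ Set.Ioo (0:ℝ) x₀, (1/2:ℝ) ≤ G k x := by
      intro x hx
      have := lowsum (Λ x) k hk1 (hΛbig x hx)
      simp only [hGdef]; linarith
    have hsub : Set.Ioo (0:ℝ) x₀ ⊆ Set.Ioo (0:ℝ) 1 :=
      Set.Ioo_subset_Ioo le_rfl hx₀le1
    have hint₀ : IntegrableOn (G k) (Set.Ioo (0:ℝ) x₀) volume := (hGint k).mono_set hsub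
    have step1 : ∫ x in Set.Ioo (0:ℝ) x₀, G k x ≤ I k := by
      apply setIntegral_mono_set (hGint k)
      · refine (ae_restrict_iff' measurableSet_Ioo).2 (ae_of_all _ fun x hx => (hG01 k x hx).1)
      · exact HasSubset.Subset.eventuallyLE hsub
    have step2 : (1/2) * x₀ ≤ ∫ x in Set.Ioo (0:ℝ) x₀, G k x := by
      have hconst : ∫ _x in Set.Ioo (0:ℝ) x₀, (1/2:ℝ) = (1/2) * x₀ := by
        rw [setIntegral_const, measureReal_def, Real.volume_Ioo, sub_zero,
          ENNReal.toReal_ofReal hx₀pos.le, smul_eq_mul]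
        ring
      calc (1/2) * x₀ = ∫ _x in Set.Ioo (0:ℝ) x₀, (1/2:ℝ) := hconst.symm
        _ ≤ ∫ x in Set.Ioo (0:ℝ) x₀, G k x :=
            setIntegral_mono_on (integrableOn_const (by simp [Real.volume_Ioo]))
              hint₀ measurableSet_Ioo hGhalf
    linarith
  -- upper bound on I k
  have hup : ∀ k : ℕ, 1 ≤ k → A ≤ k →
      I k ≤ (A/k) ^ ((1:ℝ)/γ) + 2*(1/2:ℝ)^k := by
    intro k hk1 hAk
    have hkpos : (0:ℝ) < k := by exact_mod_cast hk1
    have hbase : (0:ℝ) < A/k := by positivity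
    set x₁ : ℝ := (A/k) ^ ((1:ℝ)/γ) with hx₁def
    have hx₁pos : 0 < x₁ := Real.rpow_pos_of_pos hbase _
    have hx₁le1 : x₁ ≤ 1 :=
      Real.rpow_le_one hbase.le (by rw [div_le_one hkpos]; exact hAk) (by positivity)
    have hsplit : Set.Ioo (0:ℝ) x₁ ∪ Set.Ico x₁ 1 = Set.Ioo (0:ℝ) 1 :=
      Set.Ioo_union_Ico_eq_Ioo hx₁pos hx₁le1
    have hsub1 : Set.Ioo (0:ℝ) x₁ ⊆ Set.Ioo (0:ℝ) 1 := Set.Ioo_subset_Ioo le_rfl hx₁le1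
    have hsub2 : Set.Ico x₁ 1 ⊆ Set.Ioo (0:ℝ) 1 := fun x hx => ⟨lt_of_lt_of_le hx₁pos hx.1, hx.2⟩
    have hdisj : Disjoint (Set.Ioo (0:ℝ) x₁) (Set.Ico x₁ 1) := by
      apply Set.disjoint_left.mpr
      intro x hx hx'
      exact absurd hx'.1 (not_le.mpr hx.2)
    have hIsplit : I k = (∫ x in Set.Ioo (0:ℝ) x₁, G k x) + ∫ x in Set.Ico x₁ 1, G k x := by
      rw [hIdef]
      simp only
      rw [← hsplit, setIntegral_union hdisj measurableSet_Ico
        ((hGint k).mono_set hsub1) ((hGint k).mono_set hsub2)]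
    have hbound1 : (∫ x in Set.Ioo (0:ℝ) x₁, G k x) ≤ x₁ := by
      have hconst : ∫ _x in Set.Ioo (0:ℝ) x₁, (1:ℝ) = x₁ := by
        rw [setIntegral_const, measureReal_def, Real.volume_Ioo, sub_zero,
          ENNReal.toReal_ofReal hx₁pos.le, smul_eq_mul, mul_one]
      calc (∫ x in Set.Ioo (0:ℝ) x₁, G k x) ≤ ∫ _x in Set.Ioo (0:ℝ) x₁, (1:ℝ) :=
            setIntegral_mono_on ((hGint k).mono_set hsub1)
              (integrableOn_const (by simp [Real.volume_Ioo])) measurableSet_Ioo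
              (fun x hx => (hG01 k x (hsub1 hx)).2)
        _ = x₁ := hconst
    have hGsmall : ∀ x ∈ Set.Ico x₁ (1:ℝ), G k x ≤ 2*(1/2:ℝ)^k := by
      intro x hx
      have hx1 : x ∈ Set.Ioo (0:ℝ) 1 := hsub2 hx
      have hl0 : 0 ≤ Λ x := (hΛpos x hx1).le
      have h1 : x ^ (-γ) ≤ x₁ ^ (-γ) :=
        Real.rpow_le_rpow_of_nonpos hx₁pos hx.1 (by linarith)
      have h2 : x₁ ^ (-γ) = (A/k)⁻¹ := hrpow_inv _ hbase
      have h3 : c₂ * (A/k)⁻¹ = k / (2 * Real.exp 1) := by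
        rw [hAdef]
        have hene : Real.exp 1 ≠ 0 := (Real.exp_pos 1).ne'
        field_simp
      have h4 : Λ x ≤ (k:ℝ) / (2 * Real.exp 1) := by
        have := hΛub x hx1
        have h5 : c₂ * x ^ (-γ) ≤ c₂ * x₁ ^ (-γ) := mul_le_mul_of_nonneg_left h1 hc₂.le
        rw [h2, h3] at h5
        linarith
      have h2l : 2 * Λ x ≤ (k:ℝ) := by
        have hee : (k:ℝ) / (2 * Real.exp 1) ≤ k / 2 := by
          apply div_le_div_of_nonneg_left hkpos.le (by norm_num) (by linarith)
        linarith
      have htb := tailbound (Λ x) hl0 k hk1 h2l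
      rw [tail_eq (Λ x) hl0 k] at htb
      have hhalf : Real.exp 1 * Λ x / k ≤ 1/2 := by
        rw [div_le_iff₀ hkpos]
        have := mul_le_mul_of_nonneg_left h4 (Real.exp_pos 1).le
        calc Real.exp 1 * Λ x ≤ Real.exp 1 * ((k:ℝ) / (2 * Real.exp 1)) := this
          _ = k / 2 := by field_simp
          _ = 1/2 * k := by ring
      have hpow : (Real.exp 1 * Λ x / k) ^ k ≤ (1/2:ℝ) ^ k :=
        pow_le_pow_left₀ (by positivity) hhalf k
      simp only [hGdef]
      calc 1 - ∑ n ∈ Finset.range k, Real.exp (-Λ x) * Λ x ^ n / n.factorial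
          ≤ 2 * (Real.exp 1 * Λ x / k) ^ k := htb
        _ ≤ 2 * (1/2:ℝ) ^ k := by linarith
    have hbound2 : (∫ x in Set.Ico x₁ 1, G k x) ≤ 2*(1/2:ℝ)^k := by
      have hconst : ∫ _x in Set.Ico x₁ (1:ℝ), (2*(1/2:ℝ)^k) = (1 - x₁) * (2*(1/2:ℝ)^k) := by
        rw [setIntegral_const, measureReal_def, Real.volume_Ico,
          ENNReal.toReal_ofReal (by linarith), smul_eq_mul]
      have hmono := setIntegral_mono_on ((hGint k).mono_set hsub2)
        (integrableOn_const (by simp [Real.volume_Ico]))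
        measurableSet_Ico hGsmall
      rw [hconst] at hmono
      nlinarith [hx₁pos, pow_nonneg (by norm_num : (0:ℝ) ≤ 1/2) k]
    linarith [hIsplit, hbound1, hbound2]
  -- eventual geometric domination
  set j : ℕ := ⌈(1:ℝ)/γ⌉₊ with hjdef
  have hsumm : Summable (fun n : ℕ => (n:ℝ)^j * (1/2:ℝ)^n) :=
    summable_pow_mul_geometric_of_norm_lt_one j (by rw [Real.norm_eq_abs]; rw [abs_of_pos]; norm_num; norm_num)
  have hev0 : ∀ᶠ n : ℕ in atTop, (n:ℝ)^j * (1/2:ℝ)^n < A^((1:ℝ)/γ)/2 :=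
    hsumm.tendsto_atTop_zero.eventually_lt_const (by positivity)
  have hgeo : ∀ᶠ k : ℕ in atTop, 2*(1/2:ℝ)^k ≤ (A/(k:ℝ))^((1:ℝ)/γ) := by
    filter_upwards [hev0, eventually_ge_atTop 1] with k hk hk1
    have hkpos : (0:ℝ) < k := by exact_mod_cast hk1
    have hsplit : ((A:ℝ)/k)^((1:ℝ)/γ) = A^((1:ℝ)/γ) / (k:ℝ)^((1:ℝ)/γ) :=
      Real.div_rpow hA.le hkpos.le _
    rw [hsplit, le_div_iff₀ (Real.rpow_pos_of_pos hkpos _)]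
    have hkj : (k:ℝ)^((1:ℝ)/γ) ≤ (k:ℝ)^j := by
      rw [← Real.rpow_natCast (k:ℝ) j]
      exact Real.rpow_le_rpow_of_exponent_le (by exact_mod_cast hk1) (Nat.le_ceil _)
    calc 2*(1/2:ℝ)^k * (k:ℝ)^((1:ℝ)/γ) ≤ 2*(1/2:ℝ)^k * (k:ℝ)^j := by
          apply mul_le_mul_of_nonneg_left hkj (by positivity)
      _ = 2 * ((k:ℝ)^j * (1/2:ℝ)^k) := by ring
      _ ≤ 2 * (A^((1:ℝ)/γ)/2) := by linarith
      _ = A^((1:ℝ)/γ) := by ring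
  -- constants
  set B₁ : ℝ := Real.log (1/2) + (1/γ)*(Real.log c₁ - Real.log 4) with hB₁def
  set B₂ : ℝ := Real.log 2 + (1/γ)*Real.log A with hB₂def
  set lo : ℕ → ℝ := fun k => B₁ * (Real.log k)⁻¹ - 1/γ with hlodef
  set up : ℕ → ℝ := fun k => B₂ * (Real.log k)⁻¹ - 1/γ with hupdef
  have hkc₁ : ∀ᶠ k : ℕ in atTop, c₁ ≤ 4*(k:ℝ) := by
    filter_upwards [tendsto_natCast_atTop_atTop.eventually_ge_atTop c₁] with k hk
    linarith [hk, Nat.cast_nonneg (α := ℝ) k]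
  have hkA : ∀ᶠ k : ℕ in atTop, A ≤ (k:ℝ) :=
    tendsto_natCast_atTop_atTop.eventually_ge_atTop A
  -- the sandwich
  have hsand : ∀ᶠ k : ℕ in atTop,
      lo k ≤ Real.log (P {ω | k ≤ D ω}).toReal / Real.log k
      ∧ Real.log (P {ω | k ≤ D ω}).toReal / Real.log k ≤ up k := by
    filter_upwards [hkc₁, hkA, hgeo, eventually_ge_atTop 2] with k hck hAk hgk hk2
    have hk1 : 1 ≤ k := le_trans (by norm_num) hk2
    have hkpos : (0:ℝ) < k := by exact_mod_cast hk1
    have hk1lt : (1:ℝ) < k := by exact_mod_cast hk2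
    have hlogk : 0 < Real.log k := Real.log_pos hk1lt
    have hbase₀ : (0:ℝ) < c₁/(4*k) := by positivity
    have hbase₁ : (0:ℝ) < A/k := by positivity
    have hIlb := hlow k hk1 hck
    have hIub : I k ≤ 2 * (A/(k:ℝ))^((1:ℝ)/γ) := by
      have := hup k hk1 hAk
      linarith
    have hlbpos : (0:ℝ) < 1/2 * (c₁/(4*k)) ^ ((1:ℝ)/γ) := by
      have := Real.rpow_pos_of_pos hbase₀ ((1:ℝ)/γ); positivity
    have hIpos : 0 < I k := lt_of_lt_of_le hlbpos hIlb
    have hPt : (P {ω | k ≤ D ω}).toReal = I k := by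
      rw [hD' k, ENNReal.toReal_ofReal hIpos.le]
    rw [hPt]
    have hlogL : Real.log (1/2 * (c₁/(4*k)) ^ ((1:ℝ)/γ)) = B₁ - (1/γ)*Real.log k := by
      rw [Real.log_mul (by norm_num) (Real.rpow_pos_of_pos hbase₀ _).ne',
        Real.log_rpow hbase₀,
        Real.log_div hc₁.ne' (by positivity),
        Real.log_mul (by norm_num) hkpos.ne', hB₁def]
      ring
    have hlogU : Real.log (2 * (A/(k:ℝ))^((1:ℝ)/γ)) = B₂ - (1/γ)*Real.log k := by
      rw [Real.log_mul (by norm_num) (Real.rpow_pos_of_pos hbase₁ _).ne',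
        Real.log_rpow hbase₁,
        Real.log_div hA.ne' hkpos.ne', hB₂def]
      ring
    constructor
    · have h1 : Real.log (1/2 * (c₁/(4*k)) ^ ((1:ℝ)/γ)) ≤ Real.log (I k) :=
        Real.log_le_log hlbpos hIlb
      rw [hlogL] at h1
      have h2 : (B₁ - (1/γ)*Real.log k) / Real.log k ≤ Real.log (I k) / Real.log k :=
        (div_le_div_iff_of_pos_right hlogk).mpr h1
      have h3 : (B₁ - (1/γ)*Real.log k) / Real.log k = lo k := by
        show _ = B₁ * (Real.log k)⁻¹ - 1/γ
        rw [div_eq_iff hlogk.ne', sub_mul, mul_assoc, inv_mul_cancel₀ hlogk.ne', mul_one]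
      rw [h3] at h2
      exact h2
    · have h1 : Real.log (I k) ≤ Real.log (2 * (A/(k:ℝ))^((1:ℝ)/γ)) :=
        Real.log_le_log hIpos hIub
      rw [hlogU] at h1
      have h2 : Real.log (I k) / Real.log k ≤ (B₂ - (1/γ)*Real.log k) / Real.log k :=
        (div_le_div_iff_of_pos_right hlogk).mpr h1
      have h3 : (B₂ - (1/γ)*Real.log k) / Real.log k = up k := by
        show _ = B₂ * (Real.log k)⁻¹ - 1/γ
        rw [div_eq_iff hlogk.ne', sub_mul, mul_assoc, inv_mul_cancel₀ hlogk.ne', mul_one]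
      rw [h3] at h2
      exact h2
  -- limits of the bounding sequences
  have hlim0 : Tendsto (fun k : ℕ => (Real.log k)⁻¹) atTop (nhds 0) :=
    (Real.tendsto_log_atTop.comp tendsto_natCast_atTop_atTop).inv_tendsto_atTop
  have hlo_lim : Tendsto lo atTop (nhds (-(1/γ))) := by
    have h := (hlim0.const_mul B₁).sub_const (1/γ)
    simpa [hlodef] using h
  have hup_lim : Tendsto up atTop (nhds (-(1/γ))) := by
    have h := (hlim0.const_mul B₂).sub_const (1/γ)
    simpa [hupdef] using h
  exact tendsto_of_tendsto_of_tendsto_of_le_of_le' hlo_lim hup_lim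
    (hsand.mono fun k h => h.1) (hsand.mono fun k h => h.2)
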